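/- Let V be a Hilbert space with inner product a, W₁,…,Wₙ closed subspaces with a-orthogonal projections Pᵢ, and suppose there is a constant K₁ such that every v ∈ span(W₁ + ⋯ + Wₙ) (assumed to equal V) admits a decomposition v = Σᵢ vᵢ with vᵢ ∈ Wᵢ and Σᵢ ‖vᵢ‖²_a ≤ K₁ ‖v‖²_a. Then a(Pv, v) ≥ K₁⁻¹ a(v,v) for all v ∈ V, where P = Σᵢ Pᵢ. -/
import Mathlib


open scoped InnerProductSpace

/-- Lions' lemma / stable decomposition: if every `v` admits a decomposition
`v = Σᵢ vᵢ`, `vᵢ ∈ Wᵢ`, with `Σᵢ ‖vᵢ‖² ≤ K₁ ‖v‖²`, then the additive Schwarz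
operator satisfies `a(Pv,v) ≥ K₁⁻¹ a(v,v)`. -/
theorem stmt7 (V : Type*) [NormedAddCommGroup V] [InnerProductSpace ℝ V] [CompleteSpace V]
    (n : ℕ) (W : Fin n → Submodule ℝ V) (hWclosed : ∀ i, IsClosed ((W i : Set V)))
    (P : Fin n → V →L[ℝ] V)
    (hrange : ∀ i (v : V), P i v ∈ W i)
    (hproj : ∀ i (v : V), ∀ w ∈ W i, ⟪P i v, w⟫_ℝ = ⟪v, w⟫_ℝ)
    (K₁ : ℝ) (hK₁ : 0 < K₁)
    (hstable : ∀ v : V, ∃ vdec : Fin n → V, (∀ i, vdec i ∈ W i) ∧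
      v = ∑ i, vdec i ∧ ∑ i, ‖vdec i‖ ^ 2 ≤ K₁ * ‖v‖ ^ 2) :
    ∀ v : V, K₁⁻¹ * ⟪v, v⟫_ℝ ≤ ⟪(∑ i, P i) v, v⟫_ℝ := by
  intro v
  obtain ⟨u, hu, hv, hsum⟩ := hstable v
  set S : ℝ := ⟪(∑ i, P i) v, v⟫_ℝ with hS
  have hSeq : S = ∑ i, ‖P i v‖ ^ 2 := by
    rw [hS, ContinuousLinearMap.sum_apply, sum_inner]
    refine Finset.sum_congr rfl fun i _ => ?_
    rw [← real_inner_self_eq_norm_sq]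
    rw [real_inner_comm v (P i v)]
    exact (hproj i v (P i v) (hrange i v)).symm
  have hSnonneg : 0 ≤ S := by
    rw [hSeq]; exact Finset.sum_nonneg fun i _ => sq_nonneg _
  -- ⟪v,v⟫ ≤ Σ ‖P i v‖ ‖u i‖
  have h1 : ⟪v, v⟫_ℝ ≤ ∑ i, ‖P i v‖ * ‖u i‖ := by
    calc ⟪v, v⟫_ℝ = ∑ i, ⟪v, u i⟫_ℝ := by
          rw [← inner_sum, ← hv]
      _ = ∑ i, ⟪P i v, u i⟫_ℝ := by
          refine Finset.sum_congr rfl fun i _ => (hproj i v (u i) (hu i)).symm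
      _ ≤ ∑ i, ‖P i v‖ * ‖u i‖ :=
          Finset.sum_le_sum fun i _ => real_inner_le_norm _ _
  -- Cauchy-Schwarz for sums
  have h2 : (∑ i, ‖P i v‖ * ‖u i‖) ^ 2 ≤ (∑ i, ‖P i v‖ ^ 2) * ∑ i, ‖u i‖ ^ 2 :=
    Finset.sum_mul_sq_le_sq_mul_sq _ _ _
  have hvv : ⟪v, v⟫_ℝ = ‖v‖ ^ 2 := real_inner_self_eq_norm_sq v
  have h3 : (‖v‖ ^ 2) ^ 2 ≤ S * (K₁ * ‖v‖ ^ 2) := by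
    calc (‖v‖ ^ 2) ^ 2 ≤ (∑ i, ‖P i v‖ * ‖u i‖) ^ 2 := by
          apply pow_le_pow_left₀ (by positivity)
          rw [← hvv]; exact h1
      _ ≤ (∑ i, ‖P i v‖ ^ 2) * ∑ i, ‖u i‖ ^ 2 := h2
      _ ≤ S * (K₁ * ‖v‖ ^ 2) := by
          rw [← hSeq]
          exact mul_le_mul_of_nonneg_left hsum hSnonneg
  rw [hvv]
  rcases eq_or_lt_of_le (norm_nonneg v) with h0 | h0
  · simp [← h0, hSnonneg]
  · have hv2 : (0:ℝ) < ‖v‖ ^ 2 := by positivity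
    rw [inv_mul_le_iff₀ hK₁]
    nlinarith [h3]
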